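/- For every k ≥ 2 and n = 3k-1, there exists an edge-coloured graph on n vertices with 3k^2 - 2k edges, all colour classes of size exactly k, and no rainbow triangle. -/

import Mathlib

namespace Stmt10

def fwd (m x y : ℕ) : ℕ := (y + m - x) % m

lemma fwd_eq {m x y : ℕ} (hx : x < m) (hy : y < m) :
    fwd m x y = if x ≤ y then y - x else y + m - x := by
  unfold fwd
  split_ifs with h
  · have h2 : y + m - x = (y - x) + m := by omega
    rw [h2, Nat.add_mod_right, Nat.mod_eq_of_lt (by omega)]
  · rw [Nat.mod_eq_of_lt (by omega)]

lemma mod_char {m a : ℕ} (h : a < 2 * m) (h0 : 0 < m) :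
    a % m = if a < m then a else a - m := by
  split_ifs with h1
  · exact Nat.mod_eq_of_lt h1
  · rw [Nat.mod_eq_sub_mod (by omega), Nat.mod_eq_of_lt (by omega)]

lemma fwd_mod {m i j : ℕ} (hi : i < m) (hj : j < m) :
    fwd m i ((i + j) % m) = j := by
  have h0 : 0 < m := by omega
  have hc : (i + j) % m = if i + j < m then i + j else i + j - m := mod_char (by omega) h0
  have ht : (i + j) % m < m := Nat.mod_lt _ h0
  rw [fwd_eq hi ht, hc]
  split_ifs <;> omega

lemma mod_fwd {m x y : ℕ} (hx : x < m) (hy : y < m) :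
    (x + fwd m x y) % m = y := by
  have h0 : 0 < m := by omega
  rw [fwd_eq hx hy]
  split_ifs with h <;> rw [mod_char (by omega) h0] <;> split_ifs <;> omega

lemma fwd_pos {m x y : ℕ} (hx : x < m) (hy : y < m) (hxy : x ≠ y) : 1 ≤ fwd m x y := by
  rw [fwd_eq hx hy]; split_ifs <;> omega

lemma fwd_add {m x y : ℕ} (hx : x < m) (hy : y < m) (hxy : x ≠ y) :
    fwd m x y + fwd m y x = m := by
  rw [fwd_eq hx hy, fwd_eq hy hx]; split_ifs <;> omega

lemma no_cycle {m k x y z : ℕ} (hm : m = 3 * k - 2) (hk : 2 ≤ k)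
    (hx : x < m) (hy : y < m) (hz : z < m)
    (hxy : x ≠ y) (hyz : y ≠ z) (hxz : x ≠ z)
    (h1 : fwd m x y ≤ k - 1) (h2 : fwd m y z ≤ k - 1) (h3 : fwd m z x ≤ k - 1) : False := by
  rw [fwd_eq hx hy] at h1
  rw [fwd_eq hy hz] at h2
  rw [fwd_eq hz hx] at h3
  split_ifs at h1 h2 h3 <;> omega

def M (k : ℕ) : ℕ := 3 * k - 2

def c (k : ℕ) (x y : Fin (3 * k - 1)) : ℕ :=
  if x.val = M k then y.val
  else if y.val = M k then x.val
  else if fwd (M k) x.val y.val ≤ k - 1 then x.val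
  else if fwd (M k) y.val x.val ≤ k - 1 then y.val
  else 0

lemma c_symm (k : ℕ) (hk : 2 ≤ k) (x y : Fin (3 * k - 1)) : c k x y = c k y x := by
  have hM : M k = 3 * k - 2 := rfl
  have hx := x.isLt; have hy := y.isLt
  unfold c
  by_cases h1 : x.val = M k
  · by_cases h2 : y.val = M k
    · simp [h1, h2]
    · simp [h1, h2]
  · by_cases h2 : y.val = M k
    · simp [h1, h2]
    · have hx' : x.val < M k := by omega
      have hy' : y.val < M k := by omega
      rcases eq_or_ne x.val y.val with he | he
      · simp [h1, h2, he]
      · have hs := fwd_add hx' hy' he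
        simp only [if_neg h1, if_neg h2]
        split_ifs <;> omega

def col (k : ℕ) (hk : 2 ≤ k) : Sym2 (Fin (3 * k - 1)) → ℕ :=
  Sym2.lift ⟨c k, fun x y => c_symm k hk x y⟩

lemma col_mk (k : ℕ) (hk : 2 ≤ k) (x y : Fin (3 * k - 1)) :
    col k hk s(x, y) = c k x y := rfl

def G (k : ℕ) : SimpleGraph (Fin (3 * k - 1)) where
  Adj x y := x ≠ y ∧ (x.val = M k ∨ y.val = M k ∨
    fwd (M k) x.val y.val ≤ k - 1 ∨ fwd (M k) y.val x.val ≤ k - 1)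
  symm := by
    constructor
    rintro x y ⟨h1, h2⟩
    exact ⟨h1.symm, by tauto⟩
  loopless := by
    constructor
    rintro x ⟨h1, _⟩
    exact h1 rfl

lemma adj_iff (k : ℕ) (x y : Fin (3 * k - 1)) :
    (G k).Adj x y ↔ x ≠ y ∧ (x.val = M k ∨ y.val = M k ∨
      fwd (M k) x.val y.val ≤ k - 1 ∨ fwd (M k) y.val x.val ≤ k - 1) := Iff.rfl

def g (k : ℕ) (hk : 2 ≤ k) (p : Fin (M k) × Fin k) : Sym2 (Fin (3 * k - 1)) :=
  s((⟨p.1.val, by have hM : M k = 3 * k - 2 := rfl; have := p.1.isLt; omega⟩ : Fin (3 * k - 1)),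
    if p.2.val = 0 then (⟨M k, by have hM : M k = 3 * k - 2 := rfl; omega⟩ : Fin (3 * k - 1))
    else (⟨(p.1.val + p.2.val) % M k,
      by have hM : M k = 3 * k - 2 := rfl
         have := Nat.mod_lt (p.1.val + p.2.val) (y := M k) (by omega); omega⟩ : Fin (3 * k - 1)))

lemma hmem (k : ℕ) (hk : 2 ≤ k) (p : Fin (M k) × Fin k) :
    g k hk p ∈ (G k).edgeSet ∧ col k hk (g k hk p) = p.1.val := by
  obtain ⟨i, j⟩ := p
  have hM : M k = 3 * k - 2 := rfl
  have hi := i.isLt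
  have hj := j.isLt
  by_cases h0 : j.val = 0
  · unfold g
    simp only [if_pos h0]
    constructor
    · rw [SimpleGraph.mem_edgeSet, adj_iff]
      refine ⟨?_, Or.inr (Or.inl rfl)⟩
      intro h
      have := congrArg Fin.val h
      simp at this; omega
    · rw [col_mk]
      unfold c
      rw [if_neg (by simp; omega), if_pos rfl]
  · have hjM : j.val < M k := by omega
    have hfwd : fwd (M k) i.val ((i.val + j.val) % M k) = j.val := fwd_mod i.isLt hjM
    have ht : (i.val + j.val) % M k < M k := Nat.mod_lt _ (by omega)
    have hne : i.val ≠ (i.val + j.val) % M k := by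
      intro h
      rw [← h] at hfwd
      rw [fwd_eq i.isLt i.isLt] at hfwd
      simp at hfwd; omega
    unfold g
    simp only [if_neg h0]
    constructor
    · rw [SimpleGraph.mem_edgeSet, adj_iff]
      refine ⟨?_, Or.inr (Or.inr (Or.inl ?_))⟩
      · intro h
        have := congrArg Fin.val h
        simp at this; exact hne this
      · simpa [hfwd] using (by omega : j.val ≤ k - 1)
    · rw [col_mk]
      unfold c
      rw [if_neg (by simp; omega), if_neg (by simp; omega), if_pos (by simpa [hfwd] using (by omega : j.val ≤ k - 1))]

lemma hsurj_aux (k : ℕ) (hk : 2 ≤ k) (x y : Fin (3 * k - 1)) (hx : x.val < M k)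
    (hxy : x.val ≠ y.val)
    (h : y.val = M k ∨ (y.val < M k ∧ fwd (M k) x.val y.val ≤ k - 1)) :
    ∃ p, g k hk p = s(x, y) := by
  have hM : M k = 3 * k - 2 := rfl
  rcases h with h | ⟨hy, h⟩
  · refine ⟨(⟨x.val, hx⟩, ⟨0, by omega⟩), ?_⟩
    unfold g
    simp only [if_pos rfl]
    rw [Sym2.eq_iff]
    exact Or.inl ⟨Fin.ext rfl, Fin.ext h.symm⟩
  · have h1 : 1 ≤ fwd (M k) x.val y.val := fwd_pos hx hy hxy
    refine ⟨(⟨x.val, hx⟩, ⟨fwd (M k) x.val y.val, by omega⟩), ?_⟩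
    unfold g
    simp only [if_neg (by omega : ¬ (fwd (M k) x.val y.val = 0))]
    rw [Sym2.eq_iff]
    exact Or.inl ⟨Fin.ext rfl, Fin.ext (mod_fwd hx hy)⟩

lemma hsurj (k : ℕ) (hk : 2 ≤ k) (e : Sym2 (Fin (3 * k - 1))) (he : e ∈ (G k).edgeSet) :
    ∃ p, g k hk p = e := by
  have hM : M k = 3 * k - 2 := rfl
  induction e using Sym2.ind with
  | _ x y =>
    rw [SimpleGraph.mem_edgeSet, adj_iff] at he
    obtain ⟨hne, hadj⟩ := he
    have hxy : x.val ≠ y.val := fun h => hne (Fin.ext h)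
    have hx := x.isLt; have hy := y.isLt
    by_cases ex : x.val = M k
    · have ey : y.val < M k := by omega
      obtain ⟨p, hp⟩ := hsurj_aux k hk y x ey (Ne.symm hxy) (Or.inl ex)
      exact ⟨p, hp.trans (Sym2.eq_swap)⟩
    by_cases ey : y.val = M k
    · exact hsurj_aux k hk x y (by omega) hxy (Or.inl ey)
    have hx' : x.val < M k := by omega
    have hy' : y.val < M k := by omega
    rcases hadj with h | h | h | h
    · exact absurd h ex
    · exact absurd h ey
    · exact hsurj_aux k hk x y hx' hxy (Or.inr ⟨hy', h⟩)
    · obtain ⟨p, hp⟩ := hsurj_aux k hk y x hy' (Ne.symm hxy) (Or.inr ⟨hx', h⟩)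
      exact ⟨p, hp.trans (Sym2.eq_swap)⟩

lemma hginj (k : ℕ) (hk : 2 ≤ k) : Function.Injective (g k hk) := by
  rintro ⟨i, j⟩ ⟨i', j'⟩ hpe
  have hM : M k = 3 * k - 2 := rfl
  have h1 := (hmem k hk (i, j)).2
  have h2 := (hmem k hk (i', j')).2
  rw [hpe] at h1
  have hii : i = i' := Fin.ext (h1.symm.trans h2)
  subst hii
  unfold g at hpe
  simp only at hpe
  have hw := Sym2.congr_right.mp hpe
  have hj := j.isLt; have hj' := j'.isLt
  by_cases e0 : j.val = 0 <;> by_cases e0' : j'.val = 0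
  · exact Prod.ext rfl (Fin.ext (e0.trans e0'.symm))
  · rw [if_pos e0, if_neg e0'] at hw
    have := congrArg Fin.val hw
    simp at this
    have := Nat.mod_lt (i.val + j'.val) (y := M k) (by omega)
    omega
  · rw [if_neg e0, if_pos e0'] at hw
    have := congrArg Fin.val hw
    simp at this
    have := Nat.mod_lt (i.val + j.val) (y := M k) (by omega)
    omega
  · rw [if_neg e0, if_neg e0'] at hw
    have hv := congrArg Fin.val hw
    simp at hv
    have f1 : fwd (M k) i.val ((i.val + j.val) % M k) = j.val := fwd_mod i.isLt (by omega)
    have f2 : fwd (M k) i.val ((i.val + j'.val) % M k) = j'.val := fwd_mod i.isLt (by omega)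
    rw [hv] at f1
    exact Prod.ext rfl (Fin.ext (f1.symm.trans f2))

lemma c_cases (k : ℕ) (x y : Fin (3 * k - 1))
    (hadj : x.val = M k ∨ y.val = M k ∨
      fwd (M k) x.val y.val ≤ k - 1 ∨ fwd (M k) y.val x.val ≤ k - 1) :
    c k x y = x.val ∨ c k x y = y.val := by
  unfold c; split_ifs with e1 e2 e3 e4
  · right; rfl
  · left; rfl
  · left; rfl
  · right; rfl
  · rcases hadj with h | h | h | h <;> contradiction

lemma c_src (k : ℕ) (x y : Fin (3 * k - 1)) (hx : x.val < M k) (hy : y.val < M k)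
    (hne : x.val ≠ y.val)
    (hadj : fwd (M k) x.val y.val ≤ k - 1 ∨ fwd (M k) y.val x.val ≤ k - 1)
    (h : c k x y = x.val) : fwd (M k) x.val y.val ≤ k - 1 := by
  unfold c at h
  rw [if_neg (by omega), if_neg (by omega)] at h
  by_contra hc
  rw [if_neg hc, if_pos (hadj.resolve_left hc)] at h
  exact hne h.symm

lemma no_rainbow (k : ℕ) (hk : 2 ≤ k) (x y z : Fin (3 * k - 1))
    (hxy : (G k).Adj x y) (hyz : (G k).Adj y z) (hxz : (G k).Adj x z)
    (d1 : c k x y ≠ c k y z) (d2 : c k y z ≠ c k x z) (d3 : c k x y ≠ c k x z) : False := by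
  have hM : M k = 3 * k - 2 := rfl
  have hx := x.isLt; have hy := y.isLt; have hz := z.isLt
  have nxy : x.val ≠ y.val := fun h => hxy.ne (Fin.ext h)
  have nyz : y.val ≠ z.val := fun h => hyz.ne (Fin.ext h)
  have nxz : x.val ≠ z.val := fun h => hxz.ne (Fin.ext h)
  have axy := hxy.2
  have ayz := hyz.2
  have axz := hxz.2
  by_cases ex : x.val = M k
  · have h1 : c k x y = y.val := by unfold c; rw [if_pos ex]
    have h2 : c k x z = z.val := by unfold c; rw [if_pos ex]
    rcases c_cases k y z ayz with h | h
    · exact d1 (by rw [h1, h])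
    · exact d2 (by rw [h, h2])
  by_cases ey : y.val = M k
  · have h1 : c k x y = x.val := by unfold c; rw [if_neg ex, if_pos ey]
    have h2 : c k y z = z.val := by unfold c; rw [if_pos ey]
    rcases c_cases k x z axz with h | h
    · exact d3 (by rw [h1, h])
    · exact d2 (by rw [h2, h])
  by_cases ez : z.val = M k
  · have h1 : c k y z = y.val := by unfold c; rw [if_neg ey, if_pos ez]
    have h2 : c k x z = x.val := by unfold c; rw [if_neg ex, if_pos ez]
    rcases c_cases k x y axy with h | h
    · exact d3 (by rw [h, h2])
    · exact d1 (by rw [h, h1])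
  have hx' : x.val < M k := by omega
  have hy' : y.val < M k := by omega
  have hz' : z.val < M k := by omega
  have fxy : fwd (M k) x.val y.val ≤ k - 1 ∨ fwd (M k) y.val x.val ≤ k - 1 := by
    rcases axy with h | h | h | h
    exacts [absurd h ex, absurd h ey, Or.inl h, Or.inr h]
  have fyz : fwd (M k) y.val z.val ≤ k - 1 ∨ fwd (M k) z.val y.val ≤ k - 1 := by
    rcases ayz with h | h | h | h
    exacts [absurd h ey, absurd h ez, Or.inl h, Or.inr h]
  have fxz : fwd (M k) x.val z.val ≤ k - 1 ∨ fwd (M k) z.val x.val ≤ k - 1 := by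
    rcases axz with h | h | h | h
    exacts [absurd h ex, absurd h ez, Or.inl h, Or.inr h]
  rcases c_cases k x y axy with h1 | h1 <;> rcases c_cases k y z ayz with h2 | h2 <;>
    rcases c_cases k x z axz with h3 | h3
  · exact d3 (h1.trans h3.symm)
  · -- cycle x → y → z → x
    have f1 : fwd (M k) x.val y.val ≤ k - 1 := c_src k x y hx' hy' nxy fxy h1
    have f2 : fwd (M k) y.val z.val ≤ k - 1 := c_src k y z hy' hz' nyz fyz h2
    have f3 : fwd (M k) z.val x.val ≤ k - 1 := by
      apply c_src k z x hz' hx' (Ne.symm nxz) fxz.symm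
      rw [← c_symm k hk x z]; exact h3
    exact no_cycle hM hk hx' hy' hz' nxy nyz nxz f1 f2 f3
  · exact d3 (h1.trans h3.symm)
  · exact d2 (h2.trans h3.symm)
  · exact d1 (h1.trans h2.symm)
  · exact d1 (h1.trans h2.symm)
  · -- cycle x → z → y → x
    have f1 : fwd (M k) x.val z.val ≤ k - 1 := c_src k x z hx' hz' nxz fxz h3
    have f2 : fwd (M k) z.val y.val ≤ k - 1 := by
      apply c_src k z y hz' hy' (Ne.symm nyz) fyz.symm
      rw [← c_symm k hk y z]; exact h2
    have f3 : fwd (M k) y.val x.val ≤ k - 1 := by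
      apply c_src k y x hy' hx' (Ne.symm nxy) fxy.symm
      rw [← c_symm k hk x y]; exact h1
    exact no_cycle hM hk hx' hz' hy' nxz (Ne.symm nyz) nxy f1 f2 f3
  · exact d2 (h2.trans h3.symm)

end Stmt10

open Stmt10 in
/-- For every `k ≥ 2` and `n = 3k - 1` there is an edge-coloured graph on
`n` vertices with `3k² - 2k` edges, all (nonempty) colour classes of size exactly `k`, and
no rainbow triangle. -/
theorem stmt10 (k : ℕ) (hk : 2 ≤ k) :
    ∃ (G : SimpleGraph (Fin (3 * k - 1))) (col : Sym2 (Fin (3 * k - 1)) → ℕ),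
      G.edgeSet.ncard = 3 * k ^ 2 - 2 * k ∧
      (∀ i : ℕ, {e | e ∈ G.edgeSet ∧ col e = i} = ∅ ∨
        {e | e ∈ G.edgeSet ∧ col e = i}.ncard = k) ∧
      ¬ ∃ x y z : Fin (3 * k - 1), G.Adj x y ∧ G.Adj y z ∧ G.Adj x z ∧
        col s(x, y) ≠ col s(y, z) ∧ col s(y, z) ≠ col s(x, z) ∧ col s(x, y) ≠ col s(x, z) := by
  have hM : M k = 3 * k - 2 := rfl
  refine ⟨G k, col k hk, ?_, ?_, ?_⟩
  · -- edge count
    have hrange : (G k).edgeSet = Set.range (g k hk) := by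
      ext e
      constructor
      · intro he
        obtain ⟨p, hp⟩ := hsurj k hk e he
        exact ⟨p, hp⟩
      · rintro ⟨p, rfl⟩
        exact (hmem k hk p).1
    rw [hrange, ← Set.image_univ, Set.ncard_image_of_injective _ (hginj k hk),
      Set.ncard_univ]
    simp only [Nat.card_eq_fintype_card, Fintype.card_prod, Fintype.card_fin]
    rw [hM, Nat.sub_mul, pow_two, ← mul_assoc]
  · -- colour classes
    intro i
    by_cases hi : i < M k
    · right
      have hclass : {e | e ∈ (G k).edgeSet ∧ col k hk e = i} =
          Set.range (fun j : Fin k => g k hk (⟨i, hi⟩, j)) := by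
        ext e
        constructor
        · rintro ⟨he, hc⟩
          obtain ⟨p, rfl⟩ := hsurj k hk e he
          have hcol := (hmem k hk p).2
          refine ⟨p.2, ?_⟩
          have hp1 : (⟨i, hi⟩ : Fin (M k)) = p.1 := Fin.ext (by simp only [Fin.val_mk]; omega)
          show g k hk (⟨i, hi⟩, p.2) = g k hk p
          rw [hp1]
        · rintro ⟨j, rfl⟩
          exact ⟨(hmem k hk (⟨i, hi⟩, j)).1, (hmem k hk (⟨i, hi⟩, j)).2⟩
      rw [hclass, ← Set.image_univ, Set.ncard_image_of_injective _ ?_, Set.ncard_univ]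
      · simp
      · intro j j' h
        have := hginj k hk h
        exact (Prod.mk.injEq _ _ _ _).mp this |>.2
    · left
      ext e
      simp only [Set.mem_setOf_eq, Set.mem_empty_iff_false, iff_false, not_and]
      intro he hc
      obtain ⟨p, rfl⟩ := hsurj k hk e he
      have := (hmem k hk p).2
      have := p.1.isLt
      omega
  · rintro ⟨x, y, z, hxy, hyz, hxz, d1, d2, d3⟩
    exact no_rainbow k hk x y z hxy hyz hxz d1 d2 d3
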